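/- For all n ≥ 2 and 2 ≤ k ≤ n, the FiboNarayana numbers satisfy the recurrence (1/F_n) · binom(n,k)_F · binom(n,k-1)_F = (binom(n-1,k-1)_F)^2 + binom(n-1,k)_F · binom(n-1,k-2)_F, where both sides are equalities of rational numbers. -/

import Mathlib

/-- The Fibonacci factorial `F_n! = F_n · F_{n-1} · ⋯ · F_1`, with `F_0! = 1`. -/
def fibFact : ℕ → ℕ
  | 0 => 1
  | n + 1 => Nat.fib (n + 1) * fibFact n

/-- The fibonomial coefficient `binom(n,k)_F = F_n!/(F_k!·F_{n-k}!)` for `0 ≤ k ≤ n`,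
and `0` otherwise. Indices are integers so that negative arguments make sense. -/
def fibBinom (n k : ℤ) : ℕ :=
  if 0 ≤ k ∧ k ≤ n then fibFact n.toNat / (fibFact k.toNat * fibFact (n - k).toNat) else 0

lemma fibFact_succ (n : ℕ) : fibFact (n+1) = Nat.fib (n+1) * fibFact n := rfl
lemma fibFact_pos (n : ℕ) : 0 < fibFact n := by
  induction n with
  | zero => simp [fibFact]
  | succ m ih => rw [fibFact_succ]; exact Nat.mul_pos (Nat.fib_pos.mpr (Nat.succ_pos m)) ih

lemma fibFact_dvd (n : ℕ) : ∀ k ≤ n, fibFact k * fibFact (n - k) ∣ fibFact n := by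
  induction n using Nat.strong_induction_on with
  | _ n ih =>
    intro k hk
    rcases Nat.eq_zero_or_pos k with rfl | hk0
    · simp [fibFact]
    rcases eq_or_lt_of_le hk with rfl | hkn
    · simp [fibFact]
    -- 1 ≤ k < n, so n = m+1 with k ≤ m
    obtain ⟨m, rfl⟩ : ∃ m, n = m + 1 := ⟨n - 1, by omega⟩
    have hkm : k ≤ m := by omega
    have hfib : Nat.fib (m + 1) =
        Nat.fib (k - 1) * Nat.fib (m + 1 - k) + Nat.fib k * Nat.fib (m + 2 - k) := by
      have := Nat.fib_add (k - 1) (m + 1 - k)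
      rw [show k - 1 + (m + 1 - k) + 1 = m + 1 by omega] at this
      rw [this, show k - 1 + 1 = k by omega, show m + 1 - k + 1 = m + 2 - k by omega]
    rw [fibFact_succ, hfib, Nat.add_mul]
    apply Nat.dvd_add
    · -- fib(k-1) * fib(m+1-k) * fibFact m
      have h1 : fibFact k * fibFact (m - k) ∣ fibFact m := ih m (by omega) k hkm
      have h2 : fibFact (m + 1 - k) = Nat.fib (m + 1 - k) * fibFact (m - k) := by
        rw [show m + 1 - k = (m - k) + 1 by omega, fibFact_succ]
      calc fibFact k * fibFact (m + 1 - k)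
          = Nat.fib (m + 1 - k) * (fibFact k * fibFact (m - k)) := by rw [h2]; ring
        _ ∣ Nat.fib (m + 1 - k) * fibFact m := mul_dvd_mul_left _ h1
        _ ∣ Nat.fib (k - 1) * Nat.fib (m + 1 - k) * fibFact m := ⟨Nat.fib (k-1), by ring⟩
    · -- fib k * fib(m+2-k) * fibFact m
      have h1 : fibFact (k - 1) * fibFact (m - (k - 1)) ∣ fibFact m := ih m (by omega) (k-1) (by omega)
      have h2 : fibFact k = Nat.fib k * fibFact (k - 1) := by
        rw [show k = (k - 1) + 1 by omega, fibFact_succ, show k - 1 + 1 - 1 = k - 1 by omega]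
      have h3 : m - (k - 1) = m + 1 - k := by omega
      calc fibFact k * fibFact (m + 1 - k)
          = Nat.fib k * (fibFact (k - 1) * fibFact (m - (k - 1))) := by rw [h2, h3]; ring
        _ ∣ Nat.fib k * fibFact m := mul_dvd_mul_left _ h1
        _ ∣ Nat.fib k * Nat.fib (m + 2 - k) * fibFact m := ⟨Nat.fib (m + 2 - k), by ring⟩

lemma fibBinom_cast (a b : ℤ) (N K : ℕ) (ha : a = N) (hb : b = K) (h : K ≤ N) :
    (fibBinom a b : ℚ) = (fibFact N : ℚ) / (fibFact K * fibFact (N - K)) := by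
  subst ha hb
  have hcond : (0:ℤ) ≤ (K:ℤ) ∧ (K:ℤ) ≤ (N:ℤ) := ⟨Int.ofNat_nonneg K, by exact_mod_cast h⟩
  rw [fibBinom, if_pos hcond]
  have h1 : ((N:ℤ) - (K:ℤ)).toNat = N - K := by omega
  have h2 : ((N:ℤ)).toNat = N := by omega
  have h3 : ((K:ℤ)).toNat = K := by omega
  rw [h1, h2, h3, Nat.cast_div (fibFact_dvd N K h) (by exact_mod_cast Nat.mul_ne_zero (fibFact_pos K).ne' (fibFact_pos (N-K)).ne'), Nat.cast_mul]

lemma fibBinom_zero (n k : ℤ) (h : n < k) : fibBinom n k = 0 := by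
  rw [fibBinom, if_neg]; omega

theorem fiboNarayana_recurrence (n k : ℤ) (hn : 2 ≤ n) (hk : 2 ≤ k) (hkn : k ≤ n) :
    (1 / (Nat.fib n.toNat : ℚ)) * (fibBinom n k : ℚ) * (fibBinom n (k - 1) : ℚ) =
      (fibBinom (n - 1) (k - 1) : ℚ) ^ 2 +
        (fibBinom (n - 1) k : ℚ) * (fibBinom (n - 1) (k - 2) : ℚ) := by
  lift k to ℕ using (by omega) with K
  lift n to ℕ using (by omega) with N
  obtain ⟨c, rfl⟩ : ∃ c, K = c + 2 := ⟨K - 2, by omega⟩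
  have hK : 2 ≤ c + 2 := by omega
  have hKN : c + 2 ≤ N := by exact_mod_cast hkn
  have htn : ((N:ℤ)).toNat = N := by omega
  rw [htn]
  rcases eq_or_lt_of_le hKN with heq | hlt
  · -- K = N case
    subst heq
    rw [fibBinom_cast _ _ (c+2) (c+2) (by omega) (by omega) le_rfl,
      fibBinom_cast _ _ (c+2) (c+1) (by omega) (by omega) (by omega),
      fibBinom_cast _ _ (c+1) (c+1) (by omega) (by omega) le_rfl,
      fibBinom_zero _ _ (by omega),
      fibBinom_cast _ _ (c+1) c (by omega) (by omega) (by omega)]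
    simp only [Nat.add_sub_cancel, Nat.sub_self, show c+2-(c+1) = 1 from by omega,
      show c+1-(c+1) = 0 from by omega, show c+1-c = 1 from by omega]
    simp only [show fibFact (c+2) = Nat.fib (c+2) * fibFact (c+1) from rfl,
      show fibFact 1 = 1 from rfl, show fibFact 0 = 1 from rfl]
    have h1 : (Nat.fib (c+2) : ℚ) ≠ 0 := by
      exact_mod_cast (Nat.fib_pos.mpr (by omega)).ne'
    have h2 : (fibFact (c+1) : ℚ) ≠ 0 := by exact_mod_cast (fibFact_pos (c+1)).ne'
    push_cast
    field_simp
    simp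
  · -- K < N case
    obtain ⟨d, rfl⟩ : ∃ d, N = c + d + 3 := ⟨N - c - 3, by omega⟩
    rw [fibBinom_cast _ _ (c+d+3) (c+2) (by omega) (by omega) (by omega),
      fibBinom_cast _ _ (c+d+3) (c+1) (by omega) (by omega) (by omega),
      fibBinom_cast _ _ (c+d+2) (c+1) (by omega) (by omega) (by omega),
      fibBinom_cast _ _ (c+d+2) (c+2) (by omega) (by omega) (by omega),
      fibBinom_cast _ _ (c+d+2) c (by omega) (by omega) (by omega)]
    simp only [show c+d+3-(c+2) = d+1 from by omega, show c+d+3-(c+1) = d+2 from by omega,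
      show c+d+2-(c+1) = d+1 from by omega, show c+d+2-(c+2) = d from by omega,
      show c+d+2-c = d+2 from by omega]
    rw [show fibFact (c+d+3) = Nat.fib (c+d+3) * fibFact (c+d+2) from by
        rw [show c+d+3 = (c+d+2)+1 from by ring]; rfl,
      show fibFact (c+2) = Nat.fib (c+2) * (Nat.fib (c+1) * fibFact c) from rfl,
      show fibFact (c+1) = Nat.fib (c+1) * fibFact c from rfl,
      show fibFact (d+2) = Nat.fib (d+2) * (Nat.fib (d+1) * fibFact d) from rfl,
      show fibFact (d+1) = Nat.fib (d+1) * fibFact d from rfl,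
      show Nat.fib (c+d+3) = Nat.fib (c+1) * Nat.fib (d+1) + Nat.fib (c+2) * Nat.fib (d+2) from by
        have := Nat.fib_add (c+1) (d+1)
        rw [show c+1+(d+1)+1 = c+d+3 from by ring] at this
        rw [this]]
    have hp : (Nat.fib (c+1) : ℚ) ≠ 0 := by exact_mod_cast (Nat.fib_pos.mpr (by omega)).ne'
    have hq : (Nat.fib (c+2) : ℚ) ≠ 0 := by exact_mod_cast (Nat.fib_pos.mpr (by omega)).ne'
    have hr : (Nat.fib (d+1) : ℚ) ≠ 0 := by exact_mod_cast (Nat.fib_pos.mpr (by omega)).ne'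
    have hs : (Nat.fib (d+2) : ℚ) ≠ 0 := by exact_mod_cast (Nat.fib_pos.mpr (by omega)).ne'
    have hU : (fibFact c : ℚ) ≠ 0 := by exact_mod_cast (fibFact_pos c).ne'
    have hV : (fibFact d : ℚ) ≠ 0 := by exact_mod_cast (fibFact_pos d).ne'
    have hA : (fibFact (c+d+2) : ℚ) ≠ 0 := by exact_mod_cast (fibFact_pos (c+d+2)).ne'
    have hsum : (Nat.fib (c+1) : ℚ) * Nat.fib (d+1) + Nat.fib (c+2) * Nat.fib (d+2) ≠ 0 := by
      positivity
    push_cast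
    field_simp
    ring
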